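/- Let N ≥ 3 be an integer and let p, q be distinct primes satisfying condition (W). Then for every integer n with 3 ≤ n ≤ N+1 there exists a unique positive real number t such that max(h_n·log p, h_{n−1}·log q)^t = max(h_{n−1}·log p, h_{n−2}·log q)^t + max(h_{n−2}·log p, h_{n−3}·log q)^t, and moreover this t satisfies t ≥ 1. -/

import Mathlib

open Real

/-- The golden ratio `(1 + √5)/2`. -/
noncomputable def phiR : ℝ := (1 + Real.sqrt 5) / 2

/-- `mmax p q n = max(h_n·log p, h_{n-1}·log q)`, the logarithmic Mahler measure
of `p^{h_n}/q^{h_{n-1}}` for distinct primes `p`, `q`, where `h` is Fibonacci. -/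
noncomputable def mmax (p q n : ℕ) : ℝ :=
  max ((Nat.fib n : ℝ) * Real.log p) ((Nat.fib (n - 1) : ℝ) * Real.log q)

/-- `gmax n = max(h_n, φ·h_{n-1})`. -/
noncomputable def gmax (n : ℕ) : ℝ :=
  max (Nat.fib n : ℝ) (phiR * (Nat.fib (n - 1) : ℝ))

/-- The equation defining `t_n(p,q)`:
`m(p^{h_n}/q^{h_{n-1}})^t = m(p^{h_{n-1}}/q^{h_{n-2}})^t + m(p^{h_{n-2}}/q^{h_{n-3}})^t`. -/
def peq (p q n : ℕ) (t : ℝ) : Prop :=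
  mmax p q n ^ t = mmax p q (n - 1) ^ t + mmax p q (n - 2) ^ t

/-- The equation defining `s_n`:
`max(h_n, φ h_{n-1})^t = max(h_{n-1}, φ h_{n-2})^t + max(h_{n-2}, φ h_{n-3})^t`. -/
def geq (n : ℕ) (t : ℝ) : Prop :=
  gmax n ^ t = gmax (n - 1) ^ t + gmax (n - 2) ^ t

/-- Condition (W) on a pair of primes `(p,q)` relative to `N`. -/
def CondW (N p q : ℕ) : Prop :=
  ((Nat.fib N : ℝ) / Nat.fib (N - 1) < Real.log q / Real.log p ∧
    Real.log q / Real.log p < (Nat.fib (N - 1) : ℝ) / Nat.fib (N - 2)) ∨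
  ((Nat.fib (N - 1) : ℝ) / Nat.fib (N - 2) < Real.log q / Real.log p ∧
    Real.log q / Real.log p < (Nat.fib N : ℝ) / Nat.fib (N - 1))

/-- `V_n`: vectors `x ∈ ℕ^N` (1-based entry `i` is `x ⟨i-1⟩`) with
`Σ x_i h_i = h_n` and `Σ x_i h_{i-1} = h_{n-1}`. -/
def Vset (N n : ℕ) : Set (Fin N → ℕ) :=
  {x | ∑ i, x i * Nat.fib ((i : ℕ) + 1) = Nat.fib n ∧
       ∑ i, x i * Nat.fib (i : ℕ) = Nat.fib (n - 1)}

/-- The measure function `f_x(t) = (Σ_{i=1}^N x_i·max(h_i log p, h_{i-1} log q)^t)^{1/t}`. -/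
noncomputable def fmeas (N p q : ℕ) (x : Fin N → ℕ) (t : ℝ) : ℝ :=
  (∑ i, (x i : ℝ) * mmax p q ((i : ℕ) + 1) ^ t) ^ (1 / t)

/-- `x_n(i)`: the vector whose (i−2)nd (1-based) entry is `h_{n+1−i}`, whose
(i−1)st entry is `h_{n+2−i}`, and whose other entries are 0.  (For `i = 2`, `n = 1`
this gives `x_1(2) = (1,0,…,0)`.) -/
def xvec (N n i : ℕ) : Fin N → ℕ := fun j =>
  if (j : ℕ) + 3 = i then Nat.fib (n + 1 - i)
  else if (j : ℕ) + 2 = i then Nat.fib (n + 2 - i)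
  else 0

/-- `S_n = {x_n(i) : 3 ≤ i ≤ n+1}` for `n ≥ 2`, and `S_1 = {x_1(2)}`. -/
def Sset (N n : ℕ) : Set (Fin N → ℕ) :=
  if n = 1 then {xvec N 1 2}
  else {x | ∃ i, 3 ≤ i ∧ i ≤ n + 1 ∧ x = xvec N n i}

/-- `z` is almost consecutive-free: `z_j·z_{j+1} ≠ 0` implies `z_i = 0` for all `i > j+1`. -/
def ACF (N : ℕ) (z : Fin N → ℕ) : Prop :=
  ∀ (j : Fin N) (hj : (j : ℕ) + 1 < N),
    z j * z ⟨(j : ℕ) + 1, hj⟩ ≠ 0 → ∀ i : Fin N, (j : ℕ) + 1 < (i : ℕ) → z i = 0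

/-- `C_n`: the almost consecutive-free elements of `V_n`. -/
def Cset (N n : ℕ) : Set (Fin N → ℕ) := {z ∈ Vset N n | ACF N z}

/-- A factorization of `z ∈ V_n`: a `K`-tuple `x` with `x k ∈ V_{idx k}`,
`1 ≤ idx k ≤ n`, and `z = Σ_k x k`. -/
def IsFactorization (N n : ℕ) (z : Fin N → ℕ) {K : ℕ}
    (idx : Fin K → ℕ) (x : Fin K → Fin N → ℕ) : Prop :=
  (∀ k, 1 ≤ idx k ∧ idx k ≤ n ∧ x k ∈ Vset N (idx k)) ∧ z = ∑ k, x k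

/-- A tuple is `S`-type if each component lies in `∪_{i=1}^n S_i`. -/
def STypeFac (N n : ℕ) {K : ℕ} (x : Fin K → Fin N → ℕ) : Prop :=
  ∀ k, ∃ i, 1 ≤ i ∧ i ≤ n ∧ x k ∈ Sset N i

/-- `z` is `S`-restricted: every non-trivial (i.e. `K ≠ 1`) factorization is `S`-type. -/
def SRestricted (N n : ℕ) (z : Fin N → ℕ) : Prop :=
  ∀ (K : ℕ) (idx : Fin K → ℕ) (x : Fin K → Fin N → ℕ),
    IsFactorization N n z idx x → K ≠ 1 → STypeFac N n x

/-- `R_n`: the `S`-restricted elements of `C_n`. -/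
def Rset (N n : ℕ) : Set (Fin N → ℕ) := {z ∈ Cset N n | SRestricted N n z}

/-- The infimum attaining set `U_x = {t > 0 : f_x(t) = min{f_y(t) : y ∈ V_j}}`. -/
def Uset (N p q j : ℕ) (x : Fin N → ℕ) : Set ℝ :=
  {t | 0 < t ∧ IsLeast ((fun y => fmeas N p q y t) '' Vset N j) (fmeas N p q x t)}

/-- The shift map `λ((x_1,…,x_N)) = (0,x_1,…,x_{N-1})`. -/
def shiftMap (N : ℕ) (x : Fin N → ℕ) : Fin N → ℕ := fun j =>
  if (j : ℕ) = 0 then 0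
  else x ⟨(j : ℕ) - 1, lt_of_le_of_lt (Nat.sub_le _ _) j.isLt⟩

open Filter in
lemma aux_key (a b c : ℝ) (hb : 0 < b) (hc : 0 < c) (hba : b < a) (hca : c < a)
    (habc : a ≤ b + c) :
    ∃ t : ℝ, (0 < t ∧ a ^ t = b ^ t + c ^ t) ∧
      (∀ s : ℝ, 0 < s → a ^ s = b ^ s + c ^ s → s = t) ∧ 1 ≤ t := by
  have ha : 0 < a := hb.trans hba
  set u : ℝ := b / a with hu_def
  set v : ℝ := c / a with hv_def
  have hu : 0 < u := div_pos hb ha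
  have hv : 0 < v := div_pos hc ha
  have hu1 : u < 1 := (div_lt_one ha).2 hba
  have hv1 : v < 1 := (div_lt_one ha).2 hca
  set g : ℝ → ℝ := fun t => u ^ t + v ^ t with hg_def
  have hg_anti : StrictAnti g := by
    intro s t h
    exact add_lt_add (Real.rpow_lt_rpow_of_exponent_gt hu hu1 h)
      (Real.rpow_lt_rpow_of_exponent_gt hv hv1 h)
  have hg_cont : Continuous g := by
    apply Continuous.add
    · exact continuous_iff_continuousAt.2 fun x => Real.continuousAt_const_rpow hu.ne'
    · exact continuous_iff_continuousAt.2 fun x => Real.continuousAt_const_rpow hv.ne'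
  have hg1 : 1 ≤ g 1 := by
    simp only [hg_def, Real.rpow_one, hu_def, hv_def, ← add_div]
    exact (one_le_div ha).2 habc
  -- g tends to 0 at top
  have htend : Tendsto g atTop (nhds 0) := by
    have h1 := tendsto_rpow_atTop_of_base_lt_one u (by linarith) hu1
    have h2 := tendsto_rpow_atTop_of_base_lt_one v (by linarith) hv1
    simpa using h1.add h2
  have hev : ∀ᶠ t in atTop, g t < 1 := htend.eventually_lt_const one_pos
  obtain ⟨T, hT1, hTlt⟩ := ((eventually_ge_atTop (1 : ℝ)).and hev).exists
  -- IVT on [1, T]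
  have hsub : Set.Icc (g T) (g 1) ⊆ g '' Set.Icc 1 T :=
    intermediate_value_Icc' hT1 hg_cont.continuousOn
  obtain ⟨t, htmem, htval⟩ := hsub ⟨hTlt.le, hg1⟩
  have ht1 : 1 ≤ t := htmem.1
  have htpos : 0 < t := lt_of_lt_of_le one_pos ht1
  -- translation between the two equations
  have key : ∀ s : ℝ, (a ^ s = b ^ s + c ^ s ↔ g s = 1) := by
    intro s
    have has : (0:ℝ) < a ^ s := Real.rpow_pos_of_pos ha s
    have hbs : u ^ s = b ^ s / a ^ s := Real.div_rpow hb.le ha.le s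
    have hcs : v ^ s = c ^ s / a ^ s := Real.div_rpow hc.le ha.le s
    rw [hg_def]
    simp only [hbs, hcs, ← add_div, div_eq_one_iff_eq has.ne']
    exact eq_comm
  refine ⟨t, ⟨htpos, (key t).2 htval⟩, ?_, ht1⟩
  intro s _ hs
  exact hg_anti.injective (((key s).1 hs).trans htval.symm)


/-- Proposition `UniqueIntersection`: for `N ≥ 3`, distinct primes `p, q`
satisfying condition (W), and every `3 ≤ n ≤ N+1`, there is a unique positive real `t` with
`max(h_n log p, h_{n-1} log q)^t = max(h_{n-1} log p, h_{n-2} log q)^t + max(h_{n-2} log p, h_{n-3} log q)^t`,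
and moreover `t ≥ 1`. -/
theorem stmt0 (N p q : ℕ) (hN : 3 ≤ N) (hp : p.Prime) (hq : q.Prime) (hpq : p ≠ q)
    (hW : CondW N p q) :
    ∀ n : ℕ, 3 ≤ n → n ≤ N + 1 →
      ∃ t : ℝ, (0 < t ∧ peq p q n t) ∧ (∀ s : ℝ, 0 < s → peq p q n s → s = t) ∧ 1 ≤ t := by
  have hlp : 0 < Real.log p := Real.log_pos (by exact_mod_cast hp.one_lt)
  have hlq : 0 < Real.log q := Real.log_pos (by exact_mod_cast hq.one_lt)
  -- fibonacci ratio bound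
  have hratio : ∀ k : ℕ, (Nat.fib (k + 2) : ℝ) / Nat.fib (k + 1) ≤ 2 := by
    intro k
    have hpos : (0 : ℝ) < Nat.fib (k + 1) := by
      exact_mod_cast Nat.fib_pos.2 k.succ_pos
    rw [div_le_iff₀ hpos]
    have h1 : Nat.fib k ≤ Nat.fib (k + 1) := Nat.fib_le_fib_succ
    have h2 : Nat.fib (k + 2) = Nat.fib k + Nat.fib (k + 1) := Nat.fib_add_two
    push_cast [h2]
    have : (Nat.fib k : ℝ) ≤ Nat.fib (k + 1) := by exact_mod_cast h1
    linarith
  -- condition W implies log q < 2 log p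
  have hL : Real.log q < 2 * Real.log p := by
    obtain ⟨m, rfl⟩ := Nat.exists_eq_add_of_le hN
    have e1 : 3 + m - 1 = m + 2 := by omega
    have e2 : 3 + m - 2 = m + 1 := by omega
    have e3 : 3 + m = m + 3 := by omega
    rw [CondW, e1, e2, e3] at hW
    have hlt : Real.log q / Real.log p < 2 := by
      rcases hW with ⟨_, h⟩ | ⟨_, h⟩
      · exact h.trans_le (hratio m)
      · exact h.trans_le (hratio (m + 1))
    linarith [(div_lt_iff₀ hlp).1 hlt]
  intro n hn3 _
  obtain ⟨m, rfl⟩ := Nat.exists_eq_add_of_le hn3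
  have e1 : 3 + m - 1 = m + 2 := by omega
  have e2 : 3 + m - 2 = m + 1 := by omega
  have e3 : 3 + m = m + 3 := by omega
  have hme : ∀ t : ℝ, peq p q (3 + m) t ↔
      mmax p q (m + 3) ^ t = mmax p q (m + 2) ^ t + mmax p q (m + 1) ^ t := by
    intro t; rw [peq, e1, e2, e3]
  -- fib positivity and values as reals
  have f1 : (0 : ℝ) < Nat.fib (m + 1) := by exact_mod_cast Nat.fib_pos.2 m.succ_pos
  have f2 : (0 : ℝ) < Nat.fib (m + 2) := by exact_mod_cast Nat.fib_pos.2 (by omega)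
  have f3 : (0 : ℝ) < Nat.fib (m + 3) := by exact_mod_cast Nat.fib_pos.2 (by omega)
  have fid3 : (Nat.fib (m + 3) : ℝ) = Nat.fib (m + 1) + Nat.fib (m + 2) := by
    exact_mod_cast (Nat.fib_add_two (n := m + 1))
  have fid2 : (Nat.fib (m + 2) : ℝ) = Nat.fib m + Nat.fib (m + 1) := by
    exact_mod_cast (Nat.fib_add_two (n := m))
  have fmono : (Nat.fib m : ℝ) ≤ Nat.fib (m + 1) := by exact_mod_cast Nat.fib_le_fib_succ
  set a := mmax p q (m + 3) with ha_def
  set b := mmax p q (m + 2) with hb_def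
  set c := mmax p q (m + 1) with hc_def
  have ha_eq : a = max ((Nat.fib (m + 3) : ℝ) * Real.log p) ((Nat.fib (m + 2) : ℝ) * Real.log q) := by
    rw [ha_def, mmax]; norm_num
  have hb_eq : b = max ((Nat.fib (m + 2) : ℝ) * Real.log p) ((Nat.fib (m + 1) : ℝ) * Real.log q) := by
    rw [hb_def, mmax]; norm_num
  have hc_eq : c = max ((Nat.fib (m + 1) : ℝ) * Real.log p) ((Nat.fib m : ℝ) * Real.log q) := by
    rw [hc_def, mmax]; norm_num
  have hb0 : 0 < b := by
    rw [hb_eq]; exact lt_max_of_lt_left (mul_pos f2 hlp)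
  have hc0 : 0 < c := by
    rw [hc_eq]; exact lt_max_of_lt_left (mul_pos f1 hlp)
  -- the key strict bound: fib(k) * log q < fib(m+3) * log p ≤ a when 2*fib(k) ≤ fib(m+3)
  have hpa : (Nat.fib (m + 3) : ℝ) * Real.log p ≤ a := ha_eq ▸ le_max_left _ _
  have hqbound : (Nat.fib (m + 1) : ℝ) * Real.log q < a := by
    have h1 : (Nat.fib (m + 1) : ℝ) * Real.log q < Nat.fib (m + 1) * (2 * Real.log p) :=
      mul_lt_mul_of_pos_left hL f1
    have h2 : (Nat.fib (m + 1) : ℝ) * (2 * Real.log p) ≤ Nat.fib (m + 3) * Real.log p := by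
      have : 2 * (Nat.fib (m + 1) : ℝ) ≤ Nat.fib (m + 3) := by rw [fid3]; linarith
      nlinarith
    linarith [hpa]
  have hba : b < a := by
    rw [hb_eq]
    refine max_lt ?_ hqbound
    have h1 : (Nat.fib (m + 2) : ℝ) * Real.log p < Nat.fib (m + 3) * Real.log p := by
      rw [fid3]; nlinarith
    linarith [hpa]
  have hca : c < a := by
    rw [hc_eq]
    refine max_lt ?_ ?_
    · have h1 : (Nat.fib (m + 1) : ℝ) * Real.log p < Nat.fib (m + 3) * Real.log p := by
        rw [fid3]; nlinarith
      linarith [hpa]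
    · have h1 : (Nat.fib m : ℝ) * Real.log q ≤ Nat.fib (m + 1) * Real.log q :=
        mul_le_mul_of_nonneg_right fmono hlq.le
      linarith [hqbound]
  have habc : a ≤ b + c := by
    rw [ha_eq]
    have hbp : (Nat.fib (m + 2) : ℝ) * Real.log p ≤ b := hb_eq ▸ le_max_left _ _
    have hcp : (Nat.fib (m + 1) : ℝ) * Real.log p ≤ c := hc_eq ▸ le_max_left _ _
    have hbq : (Nat.fib (m + 1) : ℝ) * Real.log q ≤ b := hb_eq ▸ le_max_right _ _
    have hcq : (Nat.fib m : ℝ) * Real.log q ≤ c := hc_eq ▸ le_max_right _ _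
    refine max_le ?_ ?_
    · have : (Nat.fib (m + 3) : ℝ) * Real.log p
          = Nat.fib (m + 2) * Real.log p + Nat.fib (m + 1) * Real.log p := by
        rw [fid3]; ring
      linarith
    · have : (Nat.fib (m + 2) : ℝ) * Real.log q
          = Nat.fib (m + 1) * Real.log q + Nat.fib m * Real.log q := by
        rw [fid2]; ring
      linarith
  obtain ⟨t, ⟨htpos, hteq⟩, huniq, ht1⟩ := aux_key a b c hb0 hc0 hba hca habc
  exact ⟨t, ⟨htpos, (hme t).2 hteq⟩, fun s hs hps => huniq s hs ((hme s).1 hps), ht1⟩
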